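/- There exists an absolute constant C > 0 such that for every prime p, every nontrivial Dirichlet character χ modulo p, and all units a, a′, c ∈ (ZMod p)ˣ, the twisted correlation sum satisfies |Σ_{u ∈ ZMod p} S(a,u) · conj(S(a′, c·u))| ≤ C · p², where S(a,u) = Σ_{b ∈ ZMod p, b ≠ u} χ(b) · e_p(a · (u − b)⁻¹). -/

import Mathlib

/-- The standard additive character `e_p(x) = exp(2πi·x̃/p)` on `ZMod p`,
where `x̃ ∈ {0, …, p-1}` is the canonical representative of `x`. -/
noncomputable def eZMod (p : ℕ) (x : ZMod p) : ℂ :=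
  Complex.exp (2 * Real.pi * Complex.I * (x.val : ℂ) / (p : ℂ))

/-- The shifted character sum `S(a,u) = Σ_{b ≠ u} χ(b) · e_p(a · (u − b)⁻¹)`. -/
noncomputable def Ssum (p : ℕ) [Fact p.Prime] (χ : DirichletCharacter ℂ p)
    (a : (ZMod p)ˣ) (u : ZMod p) : ℂ :=
  ∑ b ∈ Finset.univ.filter (fun b : ZMod p => b ≠ u),
    χ b * eZMod p ((a : ZMod p) * (u - b)⁻¹)

lemma norm_eZMod (p : ℕ) (x : ZMod p) : ‖eZMod p x‖ = 1 := by
  have h : 2 * Real.pi * Complex.I * (x.val : ℂ) / (p : ℂ)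
      = ((2 * Real.pi * x.val / p : ℝ) : ℂ) * Complex.I := by
    push_cast; ring
  rw [eZMod, h, Complex.norm_exp_ofReal_mul_I]

variable {p : ℕ} [Fact p.Prime]

lemma conj_chi (χ : DirichletCharacter ℂ p) {u : ZMod p} (hu : u ≠ 0) :
    (starRingEnd ℂ) (χ u) = χ u⁻¹ := by
  have hu' : IsUnit u := isUnit_iff_ne_zero.mpr hu
  have h1 : χ u * (starRingEnd ℂ) (χ u) = 1 := by
    rw [Complex.mul_conj]
    norm_cast
    rw [Complex.normSq_eq_norm_sq]
    have := χ.unit_norm_eq_one hu'.unit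
    rw [IsUnit.unit_spec] at this
    rw [this]; norm_num
  have h2 : χ u * χ u⁻¹ = 1 := by
    rw [← map_mul, mul_inv_cancel₀ hu, map_one]
  have hne : χ u ≠ 0 := by
    intro h; rw [h, zero_mul] at h1; exact one_ne_zero h1.symm
  field_simp at h1 h2 ⊢
  rw [← h2] at h1
  exact mul_left_cancel₀ hne h1

open Finset in
lemma core (χ : DirichletCharacter ℂ p) (hχ : χ ≠ 1) {d : ZMod p} (hd : d ≠ 0) :
    ∑ u : ZMod p, χ (u - d) * (starRingEnd ℂ) (χ u) = -1 := by
  have hchi0 : χ 0 = 0 := χ.map_nonunit not_isUnit_zero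
  have step1 : ∑ u : ZMod p, χ (u - d) * (starRingEnd ℂ) (χ u)
      = ∑ u ∈ univ.filter (fun u : ZMod p => u ≠ 0 ∧ u ≠ d), χ (1 - d * u⁻¹) := by
    rw [← Finset.sum_filter_of_ne (p := fun u : ZMod p => u ≠ 0 ∧ u ≠ d)]
    · refine Finset.sum_congr rfl fun u hu => ?_
      simp only [mem_filter] at hu
      obtain ⟨-, hu0, hud⟩ := hu
      rw [conj_chi χ hu0, ← map_mul]
      congr 1
      field_simp
    · intro u _ h
      constructor
      · rintro rfl
        exact h (by rw [hchi0, map_zero, mul_zero])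
      · rintro rfl
        exact h (by rw [sub_self, hchi0, zero_mul])
  rw [step1]
  have step2 : ∑ u ∈ univ.filter (fun u : ZMod p => u ≠ 0 ∧ u ≠ d), χ (1 - d * u⁻¹)
      = ∑ z ∈ univ.filter (fun z : ZMod p => z ≠ 0 ∧ z ≠ 1), χ z := by
    refine Finset.sum_nbij' (fun u => 1 - d * u⁻¹) (fun z => d * (1 - z)⁻¹) ?_ ?_ ?_ ?_ ?_
    · intro u hu
      simp only [mem_filter, mem_univ, true_and] at hu ⊢
      obtain ⟨h0, hud⟩ := hu
      constructor
      · intro h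
        have h1 : d * u⁻¹ = 1 := by linear_combination -h
        have : d = u := by field_simp at h1; exact h1
        exact hud this.symm
      · intro h
        have h1 : d * u⁻¹ = 0 := by linear_combination -h
        rcases mul_eq_zero.mp h1 with h' | h'
        · exact hd h'
        · exact h0 (inv_eq_zero.mp h')
    · intro z hz
      simp only [mem_filter, mem_univ, true_and] at hz ⊢
      obtain ⟨h0, h1⟩ := hz
      have h1' : (1 : ZMod p) - z ≠ 0 := sub_ne_zero.mpr (Ne.symm h1)
      refine ⟨mul_ne_zero hd (inv_ne_zero h1'), fun h => ?_⟩
      have h2 : ((1 : ZMod p) - z)⁻¹ = 1 := mul_left_cancel₀ hd (by rw [h, mul_one])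
      have h3 : (1 : ZMod p) - z = 1 := by
        rw [← inv_inv ((1 : ZMod p) - z), h2, inv_one]
      exact h0 (by linear_combination -h3)
    · intro u hu
      simp only [mem_filter, mem_univ, true_and] at hu
      have e1 : (1 : ZMod p) - (1 - d * u⁻¹) = d * u⁻¹ := by ring
      simp only [e1]
      rw [mul_inv, inv_inv, ← mul_assoc, mul_inv_cancel₀ hd, one_mul]
    · intro z hz
      simp only [mem_filter, mem_univ, true_and] at hz
      show 1 - d * (d * (1 - z)⁻¹)⁻¹ = z
      rw [mul_inv, inv_inv, ← mul_assoc, mul_inv_cancel₀ hd, one_mul, sub_sub_cancel]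
    · intro u _
      rfl
  rw [step2]
  have h01 : (0 : ZMod p) ≠ 1 := fun h => one_ne_zero h.symm
  have hsplit := Finset.sum_filter_add_sum_filter_not Finset.univ
    (fun z : ZMod p => z ≠ 0 ∧ z ≠ 1) (fun z => χ z)
  have hset : Finset.univ.filter (fun z : ZMod p => ¬(z ≠ 0 ∧ z ≠ 1)) = {0, 1} := by
    ext z
    by_cases h : z = 0 <;> by_cases h' : z = 1 <;> simp [h, h']
  rw [hset, Finset.sum_pair h01, MulChar.sum_eq_zero_of_ne_one hχ] at hsplit
  rw [map_one, hchi0] at hsplit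
  linear_combination hsplit

open Finset in
lemma offdiag (χ : DirichletCharacter ℂ p) (hχ : χ ≠ 1) (c : (ZMod p)ˣ) {x y : ZMod p}
    (hxy : x ≠ (c : ZMod p)⁻¹ * y) :
    ∑ u : ZMod p, χ (u - x) * (starRingEnd ℂ) (χ ((c : ZMod p) * u - y))
      = -(starRingEnd ℂ) (χ (c : ZMod p)) := by
  have hc : (c : ZMod p) ≠ 0 := c.ne_zero
  have step1 : ∑ u : ZMod p, χ (u - x) * (starRingEnd ℂ) (χ ((c : ZMod p) * u - y))
      = (starRingEnd ℂ) (χ (c : ZMod p)) *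
        ∑ u : ZMod p, χ (u - x) * (starRingEnd ℂ) (χ (u - (c : ZMod p)⁻¹ * y)) := by
    rw [Finset.mul_sum]
    refine Finset.sum_congr rfl fun u _ => ?_
    have key : (c : ZMod p) * u - y = (c : ZMod p) * (u - (c : ZMod p)⁻¹ * y) := by
      field_simp
    rw [key, map_mul χ, map_mul]
    ring
  rw [step1]
  have step2 : ∑ u : ZMod p, χ (u - x) * (starRingEnd ℂ) (χ (u - (c : ZMod p)⁻¹ * y))
      = ∑ u : ZMod p, χ (u - (x - (c : ZMod p)⁻¹ * y)) * (starRingEnd ℂ) (χ u) := by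
    refine Fintype.sum_equiv (Equiv.subRight ((c : ZMod p)⁻¹ * y)) _ _ fun u => ?_
    simp only [Equiv.subRight_apply]
    have e1 : u - (c : ZMod p)⁻¹ * y - (x - (c : ZMod p)⁻¹ * y) = u - x := by ring
    rw [e1]
  rw [step2, core χ hχ (sub_ne_zero.mpr hxy), mul_neg_one]

open Finset in
lemma Ssum_eq (χ : DirichletCharacter ℂ p) (a : (ZMod p)ˣ) (u : ZMod p) :
    Ssum p χ a u = ∑ s ∈ univ.filter (fun s : ZMod p => s ≠ 0),
      χ (u - s⁻¹) * eZMod p ((a : ZMod p) * s) := by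
  rw [Ssum]
  refine Finset.sum_nbij' (fun b => (u - b)⁻¹) (fun s => u - s⁻¹) ?_ ?_ ?_ ?_ ?_
  · intro b hb
    simp only [mem_filter, mem_univ, true_and] at hb ⊢
    exact inv_ne_zero (sub_ne_zero.mpr (Ne.symm hb))
  · intro s hs
    simp only [mem_filter, mem_univ, true_and] at hs ⊢
    intro h
    exact hs (inv_eq_zero.mp (by linear_combination -h))
  · intro b hb
    rw [inv_inv, sub_sub_cancel]
  · intro s hs
    rw [sub_sub_cancel, inv_inv]
  · intro b hb
    rw [inv_inv, sub_sub_cancel]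

open Finset in
/-- The twisted correlation bound: there is an absolute constant `C > 0` such that for
every prime `p`, nontrivial `χ` mod `p` and units `a, a′, c`,
`|Σ_u S(a,u) · conj(S(a′, c·u))| ≤ C · p²`. -/
theorem stmt_4 :
    ∃ C : ℝ, 0 < C ∧ ∀ (p : ℕ) (_ : Fact p.Prime)
      (χ : DirichletCharacter ℂ p), χ ≠ 1 → ∀ (a a' c : (ZMod p)ˣ),
      ‖∑ u : ZMod p, Ssum p χ a u *
          (starRingEnd ℂ) (Ssum p χ a' ((c : ZMod p) * u))‖ ≤ C * (p : ℝ) ^ 2 := by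
  refine ⟨2, two_pos, ?_⟩
  intro p hp χ hχ a a' c
  have hp2 : (2 : ℝ) ≤ (p : ℝ) := by exact_mod_cast hp.out.two_le
  set S0 : Finset (ZMod p) := univ.filter (fun s : ZMod p => s ≠ 0) with hS0
  have key : ∑ u : ZMod p, Ssum p χ a u * (starRingEnd ℂ) (Ssum p χ a' ((c : ZMod p) * u))
      = ∑ s ∈ S0, ∑ t ∈ S0,
          (eZMod p ((a : ZMod p) * s) * (starRingEnd ℂ) (eZMod p ((a' : ZMod p) * t))) *
          ∑ u : ZMod p, χ (u - s⁻¹) * (starRingEnd ℂ) (χ ((c : ZMod p) * u - t⁻¹)) := by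
    have hterm : ∀ u : ZMod p,
        Ssum p χ a u * (starRingEnd ℂ) (Ssum p χ a' ((c : ZMod p) * u))
        = ∑ s ∈ S0, ∑ t ∈ S0,
            (χ (u - s⁻¹) * (starRingEnd ℂ) (χ ((c : ZMod p) * u - t⁻¹))) *
            (eZMod p ((a : ZMod p) * s) * (starRingEnd ℂ) (eZMod p ((a' : ZMod p) * t))) := by
      intro u
      rw [Ssum_eq, Ssum_eq, map_sum, Finset.sum_mul_sum]
      refine Finset.sum_congr rfl fun s _ => Finset.sum_congr rfl fun t _ => ?_
      rw [map_mul]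
      ring
    rw [Finset.sum_congr rfl fun u _ => hterm u, Finset.sum_comm]
    refine Finset.sum_congr rfl fun s _ => ?_
    rw [Finset.sum_comm]
    refine Finset.sum_congr rfl fun t _ => ?_
    rw [Finset.mul_sum]
    refine Finset.sum_congr rfl fun u _ => ?_
    ring
  rw [key]
  have hb : ∀ s ∈ S0, ∀ t ∈ S0,
      ‖(eZMod p ((a : ZMod p) * s) * (starRingEnd ℂ) (eZMod p ((a' : ZMod p) * t))) *
          ∑ u : ZMod p, χ (u - s⁻¹) * (starRingEnd ℂ) (χ ((c : ZMod p) * u - t⁻¹))‖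
        ≤ (if t = ((c : ZMod p) * s⁻¹)⁻¹ then (p : ℝ) else 1) := by
    intro s hs t ht
    simp only [hS0, mem_filter, mem_univ, true_and] at hs ht
    rw [norm_mul, norm_mul, norm_eZMod, starRingEnd_apply, norm_star, norm_eZMod,
      one_mul, one_mul]
    by_cases hdiag : t = ((c : ZMod p) * s⁻¹)⁻¹
    · simp only [hdiag, if_pos]
      calc ‖∑ u : ZMod p, χ (u - s⁻¹) * (starRingEnd ℂ) (χ ((c : ZMod p) * u - _))‖
          ≤ ∑ u : ZMod p, ‖χ (u - s⁻¹) * (starRingEnd ℂ) (χ ((c : ZMod p) * u - _))‖ :=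
            norm_sum_le _ _
        _ ≤ ∑ _u : ZMod p, (1 : ℝ) := by
            refine Finset.sum_le_sum fun u _ => ?_
            rw [norm_mul, starRingEnd_apply, norm_star]
            exact mul_le_one₀ (χ.norm_le_one _) (norm_nonneg _) (χ.norm_le_one _)
        _ = (p : ℝ) := by simp [ZMod.card]
    · rw [if_neg hdiag]
      have hxy : s⁻¹ ≠ (c : ZMod p)⁻¹ * t⁻¹ := by
        intro h
        apply hdiag
        have hc : (c : ZMod p) ≠ 0 := c.ne_zero
        have h2 : (c : ZMod p) * s⁻¹ = t⁻¹ := by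
          rw [h, ← mul_assoc, mul_inv_cancel₀ hc, one_mul]
        rw [h2, inv_inv]
      rw [offdiag χ hχ c hxy, norm_neg, starRingEnd_apply, norm_star]
      exact le_of_eq (χ.unit_norm_eq_one c)
  have hbound : ‖∑ s ∈ S0, ∑ t ∈ S0,
      (eZMod p ((a : ZMod p) * s) * (starRingEnd ℂ) (eZMod p ((a' : ZMod p) * t))) *
      ∑ u : ZMod p, χ (u - s⁻¹) * (starRingEnd ℂ) (χ ((c : ZMod p) * u - t⁻¹))‖
      ≤ ∑ s ∈ S0, ∑ t ∈ S0, (if t = ((c : ZMod p) * s⁻¹)⁻¹ then (p : ℝ) else 1) := by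
    refine (norm_sum_le _ _).trans (Finset.sum_le_sum fun s hs => ?_)
    exact (norm_sum_le _ _).trans (Finset.sum_le_sum fun t ht => hb s hs t ht)
  refine hbound.trans ?_
  have hcard : (S0.card : ℝ) ≤ (p : ℝ) := by
    have h1 : S0.card ≤ Fintype.card (ZMod p) := by
      rw [hS0]; exact (Finset.card_filter_le _ _).trans (by simp)
    rw [ZMod.card] at h1
    exact_mod_cast h1
  have hinner : ∀ s ∈ S0, ∑ t ∈ S0, (if t = ((c : ZMod p) * s⁻¹)⁻¹ then (p : ℝ) else 1)
      ≤ 2 * (p : ℝ) := by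
    intro s _
    have e1 : ∀ t : ZMod p, (if t = ((c : ZMod p) * s⁻¹)⁻¹ then (p : ℝ) else 1)
        = (if t = ((c : ZMod p) * s⁻¹)⁻¹ then (p : ℝ) - 1 else 0) + 1 := fun t => by
      split <;> ring
    calc ∑ t ∈ S0, (if t = ((c : ZMod p) * s⁻¹)⁻¹ then (p : ℝ) else 1)
        = (∑ t ∈ S0, (if t = ((c : ZMod p) * s⁻¹)⁻¹ then (p : ℝ) - 1 else 0)) + S0.card := by
          rw [Finset.sum_congr rfl fun t _ => e1 t, Finset.sum_add_distrib, Finset.sum_const,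
            nsmul_eq_mul, mul_one]
      _ ≤ ((p : ℝ) - 1) + (p : ℝ) := by
          rw [Finset.sum_ite_eq' S0 (((c : ZMod p) * s⁻¹)⁻¹) (fun _ => (p : ℝ) - 1)]
          split
          · exact add_le_add le_rfl hcard
          · refine add_le_add (by linarith) hcard
      _ ≤ 2 * (p : ℝ) := by linarith
  calc ∑ s ∈ S0, ∑ t ∈ S0, (if t = ((c : ZMod p) * s⁻¹)⁻¹ then (p : ℝ) else 1)
      ≤ ∑ _s ∈ S0, 2 * (p : ℝ) := Finset.sum_le_sum hinner
    _ = S0.card * (2 * (p : ℝ)) := by rw [Finset.sum_const, nsmul_eq_mul]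
    _ ≤ (p : ℝ) * (2 * (p : ℝ)) := by
        apply mul_le_mul_of_nonneg_right hcard
        positivity
    _ = 2 * (p : ℝ) ^ 2 := by ring
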